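/- Let F(a, z) be the generalized polynomial of class P(N, α) with coefficient vector a, and let a, a′ be two coefficient vectors with entries in [0, a^*] and a₋₁, a₀, a_N ≥ a_* > 0; set s = α_N + 2. Then for all x, y ∈ ℝ^d: (F(a,|x|)x − F(a′,|y|)y) · (x − y) ≥ C₃ |x − y|^s − C₂ (1 + |x| + |y|)^{s−1} |x − y| |a − a′|, with C₂ = 3N and C₃ = a_*(1−α)/(2^{s−1}(s−1)). -/
import Mathlib

open scoped RealInnerProductSpace

set_option maxHeartbeats 1000000

lemma rpow_mul_self' {a : ℝ} (ha : 0 ≤ a) {β : ℝ} (hβ : β + 1 ≠ 0) :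
    a ^ β * a = a ^ (β + 1) := by
  rcases eq_or_lt_of_le ha with h | h
  · rw [← h, Real.zero_rpow hβ, mul_zero]
  · rw [Real.rpow_add_one (ne_of_gt h)]

lemma coord_le' {n : ℕ} (f : EuclideanSpace ℝ (Fin n)) (j : Fin n) : |f j| ≤ ‖f‖ := by
  rw [EuclideanSpace.norm_eq]
  rw [show |f j| = Real.sqrt (‖f j‖ ^ 2) by rw [Real.sqrt_sq_eq_abs, Real.norm_eq_abs, abs_abs]]
  apply Real.sqrt_le_sqrt
  exact Finset.single_le_sum (fun i _ => sq_nonneg ‖f i‖) (Finset.mem_univ j)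

lemma key_pos {E : Type*} [NormedAddCommGroup E] [InnerProductSpace ℝ E]
    {β : ℝ} (hβ : -1 < β) (x y : E) :
    0 ≤ ‖x‖ ^ β * ⟪x, x - y⟫ - ‖y‖ ^ β * ⟪y, x - y⟫ := by
  have hu : ⟪x, x - y⟫ = ‖x‖ ^ 2 - ⟪x, y⟫ := by
    rw [inner_sub_right, real_inner_self_eq_norm_sq]
  have hv : ⟪y, x - y⟫ = ⟪x, y⟫ - ‖y‖ ^ 2 := by
    rw [inner_sub_right, real_inner_self_eq_norm_sq, real_inner_comm]
  have ha : (0:ℝ) ≤ ‖x‖ := norm_nonneg x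
  have hb : (0:ℝ) ≤ ‖y‖ := norm_nonneg y
  have ht : ⟪x, y⟫ ≤ ‖x‖ * ‖y‖ := real_inner_le_norm x y
  have h1 : ‖x‖ ^ β * ‖x‖ = ‖x‖ ^ (β + 1) := rpow_mul_self' ha (by linarith)
  have h2 : ‖y‖ ^ β * ‖y‖ = ‖y‖ ^ (β + 1) := rpow_mul_self' hb (by linarith)
  have hxb : (0:ℝ) ≤ ‖x‖ ^ β := Real.rpow_nonneg ha β
  have hyb : (0:ℝ) ≤ ‖y‖ ^ β := Real.rpow_nonneg hb β
  have hm : 0 ≤ (‖x‖ ^ (β+1) - ‖y‖ ^ (β+1)) * (‖x‖ - ‖y‖) := by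
    rcases le_total ‖x‖ ‖y‖ with h | h
    · have := Real.rpow_le_rpow ha h (by linarith : (0:ℝ) ≤ β + 1)
      nlinarith
    · have := Real.rpow_le_rpow hb h (by linarith : (0:ℝ) ≤ β + 1)
      nlinarith
  rw [hu, hv]
  nlinarith [mul_le_mul_of_nonneg_left ht hxb, mul_le_mul_of_nonneg_left ht hyb]

lemma key_coerc {E : Type*} [NormedAddCommGroup E] [InnerProductSpace ℝ E]
    {β : ℝ} (hβ : 0 < β) (x y : E) :
    ‖x - y‖ ^ (β + 2) / 2 ^ (β + 1) ≤ ‖x‖ ^ β * ⟪x, x - y⟫ - ‖y‖ ^ β * ⟪y, x - y⟫ := by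
  have hu : ⟪x, x - y⟫ = ‖x‖ ^ 2 - ⟪x, y⟫ := by
    rw [inner_sub_right, real_inner_self_eq_norm_sq]
  have hv : ⟪y, x - y⟫ = ⟪x, y⟫ - ‖y‖ ^ 2 := by
    rw [inner_sub_right, real_inner_self_eq_norm_sq, real_inner_comm]
  have ha : (0:ℝ) ≤ ‖x‖ := norm_nonneg x
  have hb : (0:ℝ) ≤ ‖y‖ := norm_nonneg y
  have hr : (0:ℝ) ≤ ‖x - y‖ := norm_nonneg _
  have hr2 : ‖x - y‖ ^ 2 = ‖x‖ ^ 2 - 2 * ⟪x, y⟫ + ‖y‖ ^ 2 := norm_sub_sq_real x y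
  have hxb : (0:ℝ) ≤ ‖x‖ ^ β := Real.rpow_nonneg ha β
  have hyb : (0:ℝ) ≤ ‖y‖ ^ β := Real.rpow_nonneg hb β
  have hm : 0 ≤ (‖x‖ ^ β - ‖y‖ ^ β) * (‖x‖ ^ 2 - ‖y‖ ^ 2) := by
    rcases le_total ‖x‖ ‖y‖ with h | h
    · have h' := Real.rpow_le_rpow ha h hβ.le
      have h2 : ‖x‖ ^ 2 ≤ ‖y‖ ^ 2 := by nlinarith
      nlinarith [mul_nonneg (sub_nonneg.2 h') (sub_nonneg.2 h2)]
    · have h' := Real.rpow_le_rpow hb h hβ.le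
      have h2 : ‖y‖ ^ 2 ≤ ‖x‖ ^ 2 := by nlinarith
      nlinarith [mul_nonneg (sub_nonneg.2 h') (sub_nonneg.2 h2)]
  have htri : ‖x - y‖ ≤ ‖x‖ + ‖y‖ := norm_sub_le x y
  have h2β : (0:ℝ) < (2:ℝ) ^ β := Real.rpow_pos_of_pos two_pos β
  have hcoef : ‖x - y‖ ^ β / 2 ^ β ≤ ‖x‖ ^ β + ‖y‖ ^ β := by
    rcases le_total ‖x‖ ‖y‖ with h | h
    · have hby : ‖x - y‖ / 2 ≤ ‖y‖ := by linarith
      have := Real.rpow_le_rpow (by positivity) hby hβ.le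
      rw [Real.div_rpow hr (by norm_num : (0:ℝ) ≤ 2)] at this
      linarith
    · have hby : ‖x - y‖ / 2 ≤ ‖x‖ := by linarith
      have := Real.rpow_le_rpow (by positivity) hby hβ.le
      rw [Real.div_rpow hr (by norm_num : (0:ℝ) ≤ 2)] at this
      linarith
  have hrr : ‖x - y‖ ^ β * ‖x - y‖ ^ 2 = ‖x - y‖ ^ (β + 2) := by
    have h1 : ‖x - y‖ ^ β * ‖x - y‖ = ‖x - y‖ ^ (β + 1) := rpow_mul_self' hr (by linarith)
    have h2 : ‖x - y‖ ^ (β+1) * ‖x - y‖ = ‖x - y‖ ^ (β + 1 + 1) := rpow_mul_self' hr (by linarith)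
    rw [show β + 2 = β + 1 + 1 by ring, ← h2, ← h1]; ring
  have h2p : (2:ℝ) ^ (β + 1) = 2 ^ β * 2 := by
    rw [Real.rpow_add_one (by norm_num : (2:ℝ) ≠ 0)]
  have hcoef' : ‖x - y‖ ^ β ≤ 2 ^ β * (‖x‖ ^ β + ‖y‖ ^ β) := by
    rw [div_le_iff₀ h2β] at hcoef; linarith
  have h3 : ‖x - y‖ ^ β * ‖x - y‖ ^ 2 ≤ 2 ^ β * (‖x‖ ^ β + ‖y‖ ^ β) * ‖x - y‖ ^ 2 :=
    mul_le_mul_of_nonneg_right hcoef' (sq_nonneg _)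
  rw [hu, hv, ← hrr, h2p]
  rw [div_le_iff₀ (by positivity)]
  have hid : (‖x‖ ^ β * (‖x‖ ^ 2 - ⟪x, y⟫) - ‖y‖ ^ β * (⟪x, y⟫ - ‖y‖ ^ 2)) * (2 ^ β * 2)
      = 2 ^ β * ((‖x‖ ^ β + ‖y‖ ^ β) * ‖x - y‖ ^ 2)
        + 2 ^ β * ((‖x‖ ^ β - ‖y‖ ^ β) * (‖x‖ ^ 2 - ‖y‖ ^ 2)) := by
    rw [hr2]; ring
  rw [hid]
  nlinarith [mul_nonneg h2β.le hm]

theorem stmt12 (d : ℕ) (hd : 1 ≤ d) (N : ℕ) (hN : 1 ≤ N)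
    (α : ℝ) (hα0 : 0 < α) (hα1 : α < 1)
    (e : Fin N → ℝ) (hmono : StrictMono e) (hepos : ∀ i, 0 < e i)
    (astar asup : ℝ) (hstar : 0 < astar) (hstarsup : astar ≤ asup)
    (aa aa' : EuclideanSpace ℝ (Fin (N + 2)))
    (haa : ∀ i, 0 ≤ aa i ∧ aa i ≤ asup) (haa' : ∀ i, 0 ≤ aa' i ∧ aa' i ≤ asup)
    (h0 : astar ≤ aa 0) (h1 : astar ≤ aa 1) (hL : astar ≤ aa ⟨N + 1, by omega⟩)
    (h0' : astar ≤ aa' 0) (h1' : astar ≤ aa' 1) (hL' : astar ≤ aa' ⟨N + 1, by omega⟩)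
    (F1 F2 : ℝ → ℝ)
    (hF1 : F1 = fun z => aa 0 * z ^ (-α) + aa 1 +
      ∑ i : Fin N, aa ⟨i.1 + 2, Nat.add_lt_add_right i.isLt 2⟩ * z ^ (e i))
    (hF2 : F2 = fun z => aa' 0 * z ^ (-α) + aa' 1 +
      ∑ i : Fin N, aa' ⟨i.1 + 2, Nat.add_lt_add_right i.isLt 2⟩ * z ^ (e i))
    (s : ℝ) (hs : s = e ⟨N - 1, by omega⟩ + 2) :
    ∀ x y : EuclideanSpace ℝ (Fin d),
      ⟪F1 ‖x‖ • x - F2 ‖y‖ • y, x - y⟫ ≥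
        astar * (1 - α) / (2 ^ (s - 1) * (s - 1)) * ‖x - y‖ ^ s -
          3 * (N : ℝ) * (1 + ‖x‖ + ‖y‖) ^ (s - 1) * ‖x - y‖ * ‖aa - aa'‖ := by
  intro x y
  have hN1 : N - 1 < N := by omega
  set k : Fin N := ⟨N - 1, hN1⟩ with hk
  set c : Fin N → ℝ := fun i => aa ⟨i.1 + 2, Nat.add_lt_add_right i.isLt 2⟩ with hc
  set c' : Fin N → ℝ := fun i => aa' ⟨i.1 + 2, Nat.add_lt_add_right i.isLt 2⟩ with hc'
  have hs' : s = e k + 2 := hs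
  have hs1 : s - 1 = e k + 1 := by rw [hs']; ring
  have hekpos : 0 < e k := hepos k
  have halpha : -1 < -α := by linarith
  have hek : ∀ i : Fin N, e i ≤ e k := by
    intro i
    rcases eq_or_lt_of_le (show i ≤ k from by
      rw [Fin.le_def]; simp only [hk]; omega) with h | h
    · rw [h]
    · exact (hmono h).le
  have hcnn : ∀ i : Fin N, 0 ≤ c i := fun i => by simp only [hc]; exact (haa _).1
  have hcge : astar ≤ c k := by
    have h := hL
    simp only [hc, hk]
    convert h using 3
    omega
  set u : ℝ := ⟪x, x - y⟫ with hudef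
  set v : ℝ := ⟪y, x - y⟫ with hvdef
  have ha : (0:ℝ) ≤ ‖x‖ := norm_nonneg x
  have hb : (0:ℝ) ≤ ‖y‖ := norm_nonneg y
  have hr : (0:ℝ) ≤ ‖x - y‖ := norm_nonneg _
  have hD : (0:ℝ) ≤ ‖aa - aa'‖ := norm_nonneg _
  set M : ℝ := 1 + ‖x‖ + ‖y‖ with hM
  have hM1 : (1:ℝ) ≤ M := by rw [hM]; linarith
  have hbM : ‖y‖ ≤ M := by rw [hM]; linarith
  -- split the inner product
  have hsplit : ⟪F1 ‖x‖ • x - F2 ‖y‖ • y, x - y⟫ = F1 ‖x‖ * u - F2 ‖y‖ * v := by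
    rw [inner_sub_left, real_inner_smul_left, real_inner_smul_left]
  -- expand the monotone part
  have hexp : F1 ‖x‖ * u - F1 ‖y‖ * v =
      aa 0 * (‖x‖ ^ (-α) * u - ‖y‖ ^ (-α) * v) + aa 1 * (u - v) +
        ∑ i : Fin N, c i * (‖x‖ ^ (e i) * u - ‖y‖ ^ (e i) * v) := by
    have key : ∑ i : Fin N, c i * (‖x‖ ^ (e i) * u - ‖y‖ ^ (e i) * v) =
        (∑ i : Fin N, c i * ‖x‖ ^ (e i)) * u - (∑ i : Fin N, c i * ‖y‖ ^ (e i)) * v := by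
      rw [Finset.sum_mul, Finset.sum_mul, ← Finset.sum_sub_distrib]
      exact Finset.sum_congr rfl fun i _ => by ring
    simp only [hF1]
    rw [key]; ring
  have huv : u - v = ‖x - y‖ ^ 2 := by
    rw [hudef, hvdef, ← inner_sub_left, real_inner_self_eq_norm_sq]
  have hpos0 : 0 ≤ aa 0 * (‖x‖ ^ (-α) * u - ‖y‖ ^ (-α) * v) :=
    mul_nonneg (haa 0).1 (key_pos halpha x y)
  have hpos1 : 0 ≤ aa 1 * (u - v) := by
    rw [huv]; exact mul_nonneg (haa 1).1 (sq_nonneg _)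
  have hsum_ge : astar * (‖x - y‖ ^ (e k + 2) / 2 ^ (e k + 1)) ≤
      ∑ i : Fin N, c i * (‖x‖ ^ (e i) * u - ‖y‖ ^ (e i) * v) := by
    have hterm : ∀ i ∈ (Finset.univ : Finset (Fin N)),
        0 ≤ c i * (‖x‖ ^ (e i) * u - ‖y‖ ^ (e i) * v) :=
      fun i _ => mul_nonneg (hcnn i) (key_pos (by linarith [hepos i]) x y)
    refine le_trans ?_ (Finset.single_le_sum hterm (Finset.mem_univ k))
    refine mul_le_mul hcge ?_ (by positivity) (le_trans hstar.le hcge)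
    exact key_coerc hekpos x y
  -- coordinate bound
  have hcd : ∀ j : Fin (N + 2), |aa j - aa' j| ≤ ‖aa - aa'‖ := by
    intro j
    have := coord_le' (aa - aa') j
    simpa [PiLp.sub_apply] using this
  -- power bounds
  have hpow : ∀ t : ℝ, 0 ≤ t → t ≤ e k + 1 → ‖y‖ ^ t ≤ M ^ (s - 1) := by
    intro t ht htle
    calc ‖y‖ ^ t ≤ M ^ t := Real.rpow_le_rpow hb hbM ht
      _ ≤ M ^ (s - 1) := Real.rpow_le_rpow_of_exponent_le hM1 (by rw [hs1]; exact htle)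
  have hbMs : ‖y‖ ≤ M ^ (s - 1) := by
    have := hpow 1 one_pos.le (by linarith [hepos k])
    rwa [Real.rpow_one] at this
  have hMspos : (0:ℝ) ≤ M ^ (s - 1) := Real.rpow_nonneg (by linarith) _
  -- the perturbation bound
  have hd1 : F1 ‖y‖ - F2 ‖y‖ = (aa 0 - aa' 0) * ‖y‖ ^ (-α) + (aa 1 - aa' 1) +
      ∑ i : Fin N, (c i - c' i) * ‖y‖ ^ (e i) := by
    have key : ∑ i : Fin N, (c i - c' i) * ‖y‖ ^ (e i) =
        (∑ i : Fin N, c i * ‖y‖ ^ (e i)) - ∑ i : Fin N, c' i * ‖y‖ ^ (e i) := by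
      rw [← Finset.sum_sub_distrib]
      exact Finset.sum_congr rfl fun i _ => by ring
    simp only [hF1, hF2]
    rw [key]; ring
  have habs : |F1 ‖y‖ - F2 ‖y‖| ≤ |aa 0 - aa' 0| * ‖y‖ ^ (-α) + |aa 1 - aa' 1| +
      ∑ i : Fin N, |c i - c' i| * ‖y‖ ^ (e i) := by
    rw [hd1]
    refine le_trans (abs_add_le _ _) (add_le_add (le_trans (abs_add_le _ _) (add_le_add ?_ le_rfl)) ?_)
    · rw [abs_mul, abs_of_nonneg (Real.rpow_nonneg hb _)]
    · refine le_trans (Finset.abs_sum_le_sum_abs _ _) (Finset.sum_le_sum fun i _ => ?_)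
      rw [abs_mul, abs_of_nonneg (Real.rpow_nonneg hb _)]
  have e1 : |aa 0 - aa' 0| * ‖y‖ ^ (-α) * ‖y‖ ≤ ‖aa - aa'‖ * M ^ (s - 1) := by
    rw [mul_assoc, rpow_mul_self' hb (by linarith : -α + 1 ≠ 0)]
    exact mul_le_mul (hcd 0) (hpow (-α + 1) (by linarith) (by linarith [hepos k]))
      (Real.rpow_nonneg hb _) hD
  have e2 : |aa 1 - aa' 1| * ‖y‖ ≤ ‖aa - aa'‖ * M ^ (s - 1) :=
    mul_le_mul (hcd 1) hbMs hb hD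
  have hcd3 : ∀ i : Fin N, |c i - c' i| ≤ ‖aa - aa'‖ := fun i => by
    simp only [hc, hc']; exact hcd _
  have e3 : ∀ i : Fin N, |c i - c' i| * ‖y‖ ^ (e i) * ‖y‖ ≤ ‖aa - aa'‖ * M ^ (s - 1) := by
    intro i
    rw [mul_assoc, rpow_mul_self' hb (ne_of_gt (by linarith [hepos i] : (0:ℝ) < e i + 1))]
    exact mul_le_mul (hcd3 i) (hpow (e i + 1) (by linarith [hepos i]) (by linarith [hek i]))
      (Real.rpow_nonneg hb _) hD
  have hdiffb : |F1 ‖y‖ - F2 ‖y‖| * ‖y‖ ≤ ((N:ℝ) + 2) * (‖aa - aa'‖ * M ^ (s - 1)) := by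
    calc |F1 ‖y‖ - F2 ‖y‖| * ‖y‖
        ≤ (|aa 0 - aa' 0| * ‖y‖ ^ (-α) + |aa 1 - aa' 1| +
            ∑ i : Fin N, |c i - c' i| * ‖y‖ ^ (e i)) * ‖y‖ :=
          mul_le_mul_of_nonneg_right habs hb
      _ = |aa 0 - aa' 0| * ‖y‖ ^ (-α) * ‖y‖ + |aa 1 - aa' 1| * ‖y‖ +
            ∑ i : Fin N, |c i - c' i| * ‖y‖ ^ (e i) * ‖y‖ := by
          rw [add_mul, add_mul, Finset.sum_mul]
      _ ≤ ‖aa - aa'‖ * M ^ (s - 1) + ‖aa - aa'‖ * M ^ (s - 1) +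
            ∑ i : Fin N, ‖aa - aa'‖ * M ^ (s - 1) :=
          add_le_add (add_le_add e1 e2) (Finset.sum_le_sum fun i _ => e3 i)
      _ = ((N:ℝ) + 2) * (‖aa - aa'‖ * M ^ (s - 1)) := by
          rw [Finset.sum_const, Finset.card_univ, Fintype.card_fin, nsmul_eq_mul]; ring
  have hvabs : |v| ≤ ‖y‖ * ‖x - y‖ := abs_real_inner_le_norm y (x - y)
  have hpert : (F1 ‖y‖ - F2 ‖y‖) * v ≥
      -(3 * (N:ℝ) * M ^ (s - 1) * ‖x - y‖ * ‖aa - aa'‖) := by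
    have h1' : (F1 ‖y‖ - F2 ‖y‖) * v ≥ -(|F1 ‖y‖ - F2 ‖y‖| * |v|) := by
      rw [← abs_mul]; exact neg_abs_le _
    have h2' : |F1 ‖y‖ - F2 ‖y‖| * |v| ≤ |F1 ‖y‖ - F2 ‖y‖| * (‖y‖ * ‖x - y‖) :=
      mul_le_mul_of_nonneg_left hvabs (abs_nonneg _)
    have h3' : |F1 ‖y‖ - F2 ‖y‖| * (‖y‖ * ‖x - y‖) ≤
        ((N:ℝ) + 2) * (‖aa - aa'‖ * M ^ (s - 1)) * ‖x - y‖ := by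
      rw [← mul_assoc]
      exact mul_le_mul_of_nonneg_right hdiffb hr
    have hNcast : (1:ℝ) ≤ (N:ℝ) := by exact_mod_cast hN
    have h4' : ((N:ℝ) + 2) * (‖aa - aa'‖ * M ^ (s - 1)) * ‖x - y‖ ≤
        3 * (N:ℝ) * M ^ (s - 1) * ‖x - y‖ * ‖aa - aa'‖ := by
      nlinarith [mul_nonneg (mul_nonneg hD hMspos) hr]
    linarith
  -- the coercivity constant comparison
  have hspos : (0:ℝ) < 2 ^ (s - 1) := Real.rpow_pos_of_pos two_pos _
  have hs1pos : (0:ℝ) < s - 1 := by rw [hs1]; linarith [hepos k]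
  have hrs : (0:ℝ) ≤ ‖x - y‖ ^ s := Real.rpow_nonneg hr s
  have hconst : astar * (1 - α) / (2 ^ (s - 1) * (s - 1)) * ‖x - y‖ ^ s ≤
      astar * (‖x - y‖ ^ s / 2 ^ (s - 1)) := by
    have hc1 : astar * (1 - α) / (2 ^ (s - 1) * (s - 1)) ≤ astar / 2 ^ (s - 1) := by
      have h1a : (1 - α) / (s - 1) ≤ 1 := by
        rw [div_le_one hs1pos]
        have : (1:ℝ) ≤ s - 1 := by rw [hs1]; linarith [hepos k]
        linarith
      have heq : astar * (1 - α) / (2 ^ (s - 1) * (s - 1)) =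
          astar / 2 ^ (s - 1) * ((1 - α) / (s - 1)) := by
        field_simp
      rw [heq]
      calc astar / 2 ^ (s - 1) * ((1 - α) / (s - 1)) ≤ astar / 2 ^ (s - 1) * 1 :=
            mul_le_mul_of_nonneg_left h1a (by positivity)
        _ = astar / 2 ^ (s - 1) := mul_one _
    calc astar * (1 - α) / (2 ^ (s - 1) * (s - 1)) * ‖x - y‖ ^ s
        ≤ astar / 2 ^ (s - 1) * ‖x - y‖ ^ s := mul_le_mul_of_nonneg_right hc1 hrs
      _ = astar * (‖x - y‖ ^ s / 2 ^ (s - 1)) := by ring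
  -- assemble
  rw [ge_iff_le, hsplit]
  have hdec : F1 ‖x‖ * u - F2 ‖y‖ * v =
      (F1 ‖x‖ * u - F1 ‖y‖ * v) + (F1 ‖y‖ - F2 ‖y‖) * v := by ring
  rw [hdec, hexp]
  have hkey : astar * (‖x - y‖ ^ s / 2 ^ (s - 1)) ≤
      ∑ i : Fin N, c i * (‖x‖ ^ (e i) * u - ‖y‖ ^ (e i) * v) := by
    have : ‖x - y‖ ^ (e k + 2) / 2 ^ (e k + 1) = ‖x - y‖ ^ s / 2 ^ (s - 1) := by
      rw [hs1, hs']
    rw [← this]; exact hsum_ge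
  linarith [hpert, hpos0, hpos1, hkey, hconst]
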